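/- Suppose σ : Σ* × Σ* → Σ* is a total, associative function. For every natural number k ≥ 1, there exist a natural number k' with k' ≤ k + 1 and strings s₁, …, s_{k'} ∈ Σ* such that: (1) the preimage set σ⁻¹(s₁ σ ⋯ σ s_{k'}) contains at least k distinct pairs; and (2) 2 ≤ max{|s₁|, …, |s_{k'}|} ≤ ⌈2 log₂(k + 1)⌉. -/

import Mathlib

theorem stmt_5 (σ : List Bool → List Bool → List Bool)
    (hassoc : ∀ x y z : List Bool, σ (σ x y) z = σ x (σ y z))
    (k : ℕ) (hk : 1 ≤ k) :
    ∃ (k' : ℕ) (s₁ : List Bool) (rest : List (List Bool)),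
      k' ≤ k + 1 ∧ rest.length + 1 = k' ∧
      (∃ S : Finset (List Bool × List Bool),
        S.card = k ∧ ∀ p ∈ S, σ p.1 p.2 = rest.foldl σ s₁) ∧
      2 ≤ (rest.map List.length).foldl max s₁.length ∧
      (rest.map List.length).foldl max s₁.length ≤ ⌈2 * Real.logb 2 (k + 1)⌉₊ := by
  classical
  set L := ⌈2 * Real.logb 2 (k + 1)⌉₊ with hLdef
  have hklog : (1:ℝ) ≤ Real.logb 2 ((k:ℝ) + 1) := by
    rw [Real.le_logb_iff_rpow_le (by norm_num) (by positivity), Real.rpow_one]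
    exact_mod_cast Nat.succ_le_succ hk
  have hL2 : 2 ≤ L := by
    have h1 : (1:ℕ) < L := by
      rw [hLdef, Nat.lt_ceil]
      push_cast
      nlinarith [hklog]
    omega
  have hpow : (k+1)^2 ≤ 2^L := by
    have h1 : 2 * Real.logb 2 ((k:ℝ)+1) ≤ (L:ℝ) := Nat.le_ceil _
    have h2 : Real.logb 2 (((k:ℝ)+1)^2) ≤ (L:ℝ) := by
      rw [Real.logb_pow]; push_cast; linarith
    have h3 : ((k:ℝ)+1)^2 ≤ (2:ℝ) ^ (L:ℝ) := by
      rw [← Real.logb_le_iff_le_rpow (by norm_num) (by positivity)]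
      exact h2
    have h4 : ((k:ℝ)+1)^2 ≤ ((2:ℝ))^(L:ℕ) := by rwa [Real.rpow_natCast] at h3
    exact_mod_cast h4
  set A : Finset (List Bool) := (Finset.univ : Finset (Fin L → Bool)).image (fun f => List.ofFn f)
    with hAdef
  have hAlen : ∀ s ∈ A, s.length = L := by
    intro s hs
    rw [hAdef, Finset.mem_image] at hs
    obtain ⟨f, _, rfl⟩ := hs
    simp
  have hAcard : A.card = 2^L := by
    rw [hAdef, Finset.card_image_of_injective _ List.ofFn_injective, Finset.card_univ,
      Fintype.card_fun]
    simp
  have hAne : A.Nonempty := Finset.card_pos.mp (by rw [hAcard]; positivity)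
  -- fold lemma from associativity
  have hfold : ∀ (l : List (List Bool)) (x y : List Bool),
      σ x (l.foldl σ y) = l.foldl σ (σ x y) := by
    intro l
    induction l with
    | nil => intro x y; rfl
    | cons a t ih =>
      intro x y
      rw [List.foldl_cons, List.foldl_cons, ih, hassoc]
  -- max of constant list
  have hmaxaux : ∀ (l : List ℕ), (∀ x ∈ l, x = L) → l.foldl max L = L := by
    intro l
    induction l with
    | nil => intro _; rfl
    | cons b t ih =>
      intro h
      have hb : b = L := h b (by simp)
      rw [List.foldl_cons, hb, max_self]
      exact ih (fun x hx => h x (by simp [hx]))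
  have hmaxlen : ∀ (s₁ : List Bool) (rest : List (List Bool)), s₁ ∈ A → (∀ s ∈ rest, s ∈ A) →
      (rest.map List.length).foldl max s₁.length = L := by
    intro s₁ rest h1 h2
    rw [hAlen s₁ h1]
    refine hmaxaux _ ?_
    intro x hx
    rw [List.mem_map] at hx
    obtain ⟨s, hs, rfl⟩ := hx
    exact hAlen s (h2 s hs)
  -- main greedy invariant
  have main : ∀ i : ℕ, 1 ≤ i → i ≤ k →
      ((∃ (s₁ : List Bool) (rest : List (List Bool)), s₁ ∈ A ∧ (∀ s ∈ rest, s ∈ A) ∧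
          rest.length + 1 ≤ k + 1 ∧ ∃ S : Finset (List Bool × List Bool),
          S.card = k ∧ ∀ p ∈ S, σ p.1 p.2 = rest.foldl σ s₁) ∨
       (∃ (s₁ : List Bool) (rest : List (List Bool)), s₁ ∈ A ∧ (∀ s ∈ rest, s ∈ A) ∧
          rest.length + 1 = i ∧ ∀ j₁ < i, ∀ j₂ < i,
            List.foldl σ s₁ (rest.take j₁) = List.foldl σ s₁ (rest.take j₂) → j₁ = j₂)) := by
    intro i
    induction i with
    | zero => omega
    | succ i ih =>
      intro _ hik
      by_cases hi0 : i = 0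
      · -- base case : i + 1 = 1
        subst hi0
        right
        obtain ⟨s₁, hs₁⟩ := hAne
        exact ⟨s₁, [], hs₁, by simp, by simp, by omega⟩
      · have hi1 : 1 ≤ i := by omega
        rcases ih hi1 (by omega) with hdone | hinv
        · exact Or.inl hdone
        · obtain ⟨s₁, rest, hs₁A, hrA, hrlen, hinj⟩ := hinv
          set p := rest.foldl σ s₁ with hpdef
          by_cases himg : (A.image (fun s => σ p s)).card ≤ k
          · -- heavy fiber case : done
            left
            have hmap : ∀ a ∈ A, σ p a ∈ A.image (fun s => σ p s) :=
              fun a ha => Finset.mem_image_of_mem _ ha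
            have hlt : (A.image (fun s => σ p s)).card * k < A.card := by
              calc (A.image (fun s => σ p s)).card * k ≤ k * k := Nat.mul_le_mul_right k himg
              _ < (k+1)^2 := by nlinarith
              _ ≤ 2^L := hpow
              _ = A.card := hAcard.symm
            obtain ⟨y, hy, hylt⟩ :=
              Finset.exists_lt_card_fiber_of_mul_lt_card_of_maps_to hmap hlt
            obtain ⟨T, hTsub, hTcard⟩ :=
              Finset.exists_subset_card_eq (le_of_lt hylt)
            have hTne : T.Nonempty := by
              rw [← Finset.card_pos, hTcard]; omega
            obtain ⟨s₀, hs₀⟩ := hTne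
            have hs₀' := hTsub hs₀
            rw [Finset.mem_filter] at hs₀'
            refine ⟨s₁, rest ++ [s₀], hs₁A, ?_, ?_, ?_⟩
            · intro s hs
              rw [List.mem_append] at hs
              rcases hs with hs | hs
              · exact hrA s hs
              · simp at hs; subst hs; exact hs₀'.1
            · simp; omega
            · refine ⟨T.image (fun s => (p, s)), ?_, ?_⟩
              · rw [Finset.card_image_of_injective _ (fun a b hab => by
                  simpa using hab), hTcard]
              · intro q hq
                rw [Finset.mem_image] at hq
                obtain ⟨s, hsT, rfl⟩ := hq
                have hsf := hTsub hsT
                rw [Finset.mem_filter] at hsf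
                have hfa : (rest ++ [s₀]).foldl σ s₁ = σ p s₀ := by
                  rw [List.foldl_append]; rfl
                rw [hfa, hs₀'.2]
                exact hsf.2
          · -- big image case : extend with a fresh prefix
            right
            push_neg at himg
            set B := (Finset.range i).image (fun j => List.foldl σ s₁ (rest.take j)) with hBdef
            have hnots : ¬ (A.image (fun s => σ p s)) ⊆ B := by
              intro hsub
              have h1 := Finset.card_le_card hsub
              have h2 : B.card ≤ i := le_trans Finset.card_image_le (by simp)
              omega
            obtain ⟨y, hy, hyB⟩ := Finset.not_subset.mp hnots
            rw [Finset.mem_image] at hy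
            obtain ⟨s, hsA, rfl⟩ := hy
            have htake : ∀ j, j < i → (rest ++ [s]).take j = rest.take j := by
              intro j hj
              exact List.take_append_of_le_length (by omega)
            have htop : (rest ++ [s]).take i = rest ++ [s] :=
              List.take_of_length_le (by simp; omega)
            have hfa : List.foldl σ s₁ (rest ++ [s]) = σ p s := by
              rw [List.foldl_append]; rfl
            have hynotin : ∀ j < i, σ p s ≠ List.foldl σ s₁ (rest.take j) := by
              intro j hj heq'
              exact hyB (Finset.mem_image.mpr ⟨j, Finset.mem_range.mpr hj, heq'.symm⟩)
            refine ⟨s₁, rest ++ [s], hs₁A, ?_, by simp; omega, ?_⟩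
            · intro t ht
              rw [List.mem_append] at ht
              rcases ht with ht | ht
              · exact hrA t ht
              · simp at ht; subst ht; exact hsA
            · intro j₁ hj₁ j₂ hj₂ heq
              by_cases e₁ : j₁ = i <;> by_cases e₂ : j₂ = i
              · omega
              · exfalso
                subst e₁
                rw [htop, hfa, htake j₂ (by omega)] at heq
                exact hynotin j₂ (by omega) heq
              · exfalso
                subst e₂
                rw [htop, hfa, htake j₁ (by omega)] at heq
                exact hynotin j₁ (by omega) heq.symm
              · rw [htake j₁ (by omega), htake j₂ (by omega)] at heq
                exact hinj j₁ (by omega) j₂ (by omega) heq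
  rcases main k hk le_rfl with hdone | hinv
  · obtain ⟨s₁, rest, hs₁A, hrA, hlen, S, hScard, hS⟩ := hdone
    exact ⟨rest.length + 1, s₁, rest, hlen, rfl, ⟨S, hScard, hS⟩,
      by rw [hmaxlen s₁ rest hs₁A hrA]; exact hL2,
      le_of_eq (hmaxlen s₁ rest hs₁A hrA)⟩
  · obtain ⟨s₁, rest, hs₁A, hrA, hrlen, hinj⟩ := hinv
    obtain ⟨sf, hsf⟩ := hAne
    set r := rest ++ [sf] with hrdef
    have hrlen' : r.length = k := by simp [hrdef]; omega
    have hrA' : ∀ s ∈ r, s ∈ A := by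
      intro t ht
      rw [hrdef, List.mem_append] at ht
      rcases ht with ht | ht
      · exact hrA t ht
      · simp at ht; subst ht; exact hsf
    have htake : ∀ j, j < k → r.take j = rest.take j := by
      intro j hj
      exact List.take_append_of_le_length (by omega)
    refine ⟨k + 1, s₁, r, le_rfl, by omega, ?_,
      by rw [hmaxlen s₁ r hs₁A hrA']; exact hL2,
      le_of_eq (hmaxlen s₁ r hs₁A hrA')⟩
    refine ⟨(Finset.range k).image
      (fun j => (List.foldl σ s₁ (r.take j), List.foldl σ (r.getD j []) (r.drop (j+1)))), ?_, ?_⟩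
    · rw [Finset.card_image_of_injOn, Finset.card_range]
      intro j₁ h₁ j₂ h₂ heq
      rw [Finset.mem_coe, Finset.mem_range] at h₁ h₂
      have hfst := congrArg Prod.fst heq
      simp only at hfst
      rw [htake j₁ h₁, htake j₂ h₂] at hfst
      exact hinj j₁ h₁ j₂ h₂ hfst
    · intro q hq
      rw [Finset.mem_image] at hq
      obtain ⟨j, hj, rfl⟩ := hq
      rw [Finset.mem_range] at hj
      have hjlen : j < r.length := by omega
      have hdrop : r.drop j = r[j] :: r.drop (j+1) := List.drop_eq_getElem_cons hjlen
      have hgetD : r.getD j [] = r[j] := List.getD_eq_getElem r [] hjlen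
      calc σ (List.foldl σ s₁ (r.take j)) (List.foldl σ (r.getD j []) (r.drop (j+1)))
          = List.foldl σ (σ (List.foldl σ s₁ (r.take j)) (r.getD j [])) (r.drop (j+1)) :=
            hfold _ _ _
        _ = List.foldl σ (List.foldl σ s₁ (r.take j)) (r.drop j) := by
            rw [hgetD, hdrop, List.foldl_cons]
        _ = List.foldl σ s₁ (r.take j ++ r.drop j) := List.foldl_append.symm
        _ = r.foldl σ s₁ := by rw [List.take_append_drop]
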